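/- Every strictly convex polyhedral cone in ℝ³ with exactly 4 facets is linearly equivalent to C_o: if C = ∩_{i=1}^4 {x ∈ ℝ³ : ⟨x,w_i⟩ ≥ 0} is a closed convex cone with nonempty interior satisfying C ∩ (−C) = {0}, such that each F_i = C ∩ {x : ⟨x,w_i⟩ = 0} is 2-dimensional and the four F_i are pairwise distinct, then there exists a linear isomorphism A of ℝ³ with A(C_o) = C. -/

import Mathlib

noncomputable section

/-- The four normal directions `v₁ = e₁+e₃`, `v₂ = e₂+e₃`, `v₃ = e₃−e₁`, `v₄ = e₃−e₂`. -/
def vCone : Fin 4 → Fin 3 → ℝ := ![![1, 0, 1], ![0, 1, 1], ![-1, 0, 1], ![0, -1, 1]]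

/-- The standard dot product on `ℝ³`. -/
def dot3 (x y : Fin 3 → ℝ) : ℝ := ∑ i, x i * y i

/-- The cone `C_o = {x ∈ ℝ³ : ⟨x, v_i⟩ ≥ 0, i = 1,…,4}`. -/
def Co : Set (Fin 3 → ℝ) := {x | ∀ i, 0 ≤ dot3 x (vCone i)}

/-- The facet `F_i = C_o ∩ {⟨·, v_i⟩ = 0}`. -/
def CoFacet (i : Fin 4) : Set (Fin 3 → ℝ) := {x | x ∈ Co ∧ dot3 x (vCone i) = 0}

/-- `Λ ⊆ ℝ³` is a lattice: the `ℤ`-span of an `ℝ`-basis of `ℝ³`. -/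
def IsLattice (Λ : AddSubgroup (Fin 3 → ℝ)) : Prop :=
  ∃ e : Module.Basis (Fin 3) ℝ (Fin 3 → ℝ), Λ = AddSubgroup.closure (Set.range ⇑e)

/-- A nonzero `w ∈ Λ` is primitive if `w = k·w′` with `w′ ∈ Λ` and `k` a positive integer
forces `k = 1`. -/
def IsPrimitive (Λ : AddSubgroup (Fin 3 → ℝ)) (w : Fin 3 → ℝ) : Prop :=
  w ∈ Λ ∧ w ≠ 0 ∧
    ∀ (k : ℕ) (w' : Fin 3 → ℝ), 0 < k → w' ∈ Λ → w = (k : ℝ) • w' → k = 1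

/-- `(C_o,Λ)` is good: each ray `ℝ_{>0} v_i` contains a primitive vector `û_i` of `Λ`, and
for every `I ⊆ {1,2,3,4}` with `∩_{i∈I} F_i ≠ {0}`, the `ℤ`-span of `{û_i : i ∈ I}` equals
`Λ ∩ span_ℝ {û_i : i ∈ I}`. -/
def IsGoodCone (Λ : AddSubgroup (Fin 3 → ℝ)) : Prop :=
  ∃ uh : Fin 4 → Fin 3 → ℝ,
    (∀ i, IsPrimitive Λ (uh i) ∧ ∃ s : ℝ, 0 < s ∧ uh i = s • vCone i) ∧
    ∀ I : Finset (Fin 4), (⋂ i ∈ I, CoFacet i) ≠ {0} →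
      AddSubgroup.closure (uh '' ↑I) =
        Λ ⊓ (Submodule.span ℝ (uh '' ↑I)).toAddSubgroup

namespace St19

lemma dot3_comm (x y : Fin 3 → ℝ) : dot3 x y = dot3 y x := by
  simp [dot3, mul_comm]

/-- dot3 as a linear functional in the first variable. -/
def dotF (u : Fin 3 → ℝ) : (Fin 3 → ℝ) →ₗ[ℝ] ℝ where
  toFun x := dot3 x u
  map_add' x y := by simp [dot3, add_mul, Finset.sum_add_distrib]
  map_smul' c x := by simp [dot3, Finset.mul_sum, mul_assoc]

@[simp] lemma dotF_apply (u x : Fin 3 → ℝ) : dotF u x = dot3 x u := rfl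

lemma dot3_add_left (x y z : Fin 3 → ℝ) : dot3 (x + y) z = dot3 x z + dot3 y z :=
  (dotF z).map_add x y

lemma dot3_smul_left (c : ℝ) (x z : Fin 3 → ℝ) : dot3 (c • x) z = c * dot3 x z :=
  (dotF z).map_smul c x

lemma dot3_add_right (x y z : Fin 3 → ℝ) : dot3 x (y + z) = dot3 x y + dot3 x z := by
  rw [dot3_comm, dot3_add_left, dot3_comm y x, dot3_comm z x]

lemma dot3_smul_right (c : ℝ) (x z : Fin 3 → ℝ) : dot3 x (c • z) = c * dot3 x z := by
  rw [dot3_comm, dot3_smul_left, dot3_comm]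

@[simp] lemma dot3_zero_left (x : Fin 3 → ℝ) : dot3 0 x = 0 := by simp [dot3]
@[simp] lemma dot3_zero_right (x : Fin 3 → ℝ) : dot3 x 0 = 0 := by simp [dot3]

lemma dot3_self_nonneg (x : Fin 3 → ℝ) : 0 ≤ dot3 x x := by
  apply Finset.sum_nonneg; intro i _; exact mul_self_nonneg _

lemma dot3_self_eq_zero {x : Fin 3 → ℝ} (h : dot3 x x = 0) : x = 0 := by
  have := (Finset.sum_eq_zero_iff_of_nonneg (fun i _ => mul_self_nonneg (x i))).mp h
  funext i
  have h2 := this i (Finset.mem_univ i)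
  simpa using mul_self_eq_zero.mp h2

lemma dot3_sum_right {n : Type*} [Fintype n] (x : Fin 3 → ℝ) (f : n → Fin 3 → ℝ) :
    dot3 x (∑ t, f t) = ∑ t, dot3 x (f t) := by
  rw [dot3_comm]
  show dotF x (∑ t, f t) = _
  rw [map_sum]
  simp [dot3_comm]

end St19

namespace St19

section Main

variable {w : Fin 4 → Fin 3 → ℝ} {C : Set (Fin 3 → ℝ)}

lemma dot3_sub_left (x y z : Fin 3 → ℝ) : dot3 (x - y) z = dot3 x z - dot3 y z :=
  (dotF z).map_sub x y

lemma dot3_sub_right (x y z : Fin 3 → ℝ) : dot3 x (y - z) = dot3 x y - dot3 x z := by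
  rw [dot3_comm, dot3_sub_left, dot3_comm y x, dot3_comm z x]

lemma spanC_top (hint : (interior C).Nonempty) : Submodule.span ℝ C = ⊤ := by
  apply Submodule.eq_top_of_nonempty_interior'
  obtain ⟨x, hx⟩ := hint
  exact ⟨x, interior_mono (Submodule.subset_span) hx⟩

lemma contra_ker (hint : (interior C).Nonempty) {u : Fin 3 → ℝ} (hu : u ≠ 0)
    (h : ∀ x ∈ C, dot3 x u = 0) : False := by
  have hle : Submodule.span ℝ C ≤ LinearMap.ker (dotF u) :=
    Submodule.span_le.mpr (fun x hx => h x hx)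
  rw [spanC_top hint] at hle
  have : dot3 u u = 0 := hle (Submodule.mem_top (R := ℝ) (M := Fin 3 → ℝ))
  exact hu (dot3_self_eq_zero this)

lemma finrank_fun3 : Module.finrank ℝ (Fin 3 → ℝ) = 3 := Module.finrank_fin_fun ℝ

lemma wZ (hint : (interior C).Nonempty)
    (hdim : ∀ i, Module.finrank ℝ (Submodule.span ℝ {x | x ∈ C ∧ dot3 x (w i) = 0}) = 2)
    (i : Fin 4) : w i ≠ 0 := by
  intro h
  have hset : {x | x ∈ C ∧ dot3 x (w i) = 0} = C := by
    ext x; simp [h]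
  have h2 := hdim i
  rw [hset, spanC_top hint] at h2
  rw [finrank_top, finrank_fun3] at h2
  omega

lemma wP (hC : C = {x | ∀ i, 0 ≤ dot3 x (w i)}) (hint : (interior C).Nonempty)
    (hdim : ∀ i, Module.finrank ℝ (Submodule.span ℝ {x | x ∈ C ∧ dot3 x (w i) = 0}) = 2)
    (hdistinct : ∀ i j, i ≠ j →
      {x | x ∈ C ∧ dot3 x (w i) = 0} ≠ {x | x ∈ C ∧ dot3 x (w j) = 0})
    {i j : Fin 4} (hij : i ≠ j) (c : ℝ) : w j ≠ c • w i := by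
  intro h
  rcases lt_trichotomy c 0 with hc | hc | hc
  · -- then for x in C, dot3 x (w i) = 0
    apply contra_ker hint (wZ hint hdim i)
    intro x hx
    have h1 : 0 ≤ dot3 x (w i) := by rw [hC] at hx; exact hx i
    have h2 : 0 ≤ dot3 x (w j) := by rw [hC] at hx; exact hx j
    rw [h, dot3_smul_right] at h2
    nlinarith
  · exact wZ hint hdim j (by rw [h, hc, zero_smul])
  · apply hdistinct j i hij.symm
    ext x
    simp only [Set.mem_setOf_eq, h, dot3_smul_right]
    constructor
    · rintro ⟨h1, h2⟩; exact ⟨h1, by nlinarith⟩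
    · rintro ⟨h1, h2⟩; exact ⟨h1, by rw [h2, mul_zero]⟩

lemma pair_indep (hC : C = {x | ∀ i, 0 ≤ dot3 x (w i)}) (hint : (interior C).Nonempty)
    (hdim : ∀ i, Module.finrank ℝ (Submodule.span ℝ {x | x ∈ C ∧ dot3 x (w i) = 0}) = 2)
    (hdistinct : ∀ i j, i ≠ j →
      {x | x ∈ C ∧ dot3 x (w i) = 0} ≠ {x | x ∈ C ∧ dot3 x (w j) = 0})
    {i j : Fin 4} (hij : i ≠ j) : LinearIndependent ℝ ![w i, w j] := by
  rw [linearIndependent_fin2]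
  refine ⟨by simpa using wZ hint hdim j, fun a h => ?_⟩
  exact wP hC hint hdim hdistinct hij.symm a (by simpa using h.symm)

lemma ker2_finrank {u v : Fin 3 → ℝ} (h : LinearIndependent ℝ ![u, v]) :
    Module.finrank ℝ (LinearMap.ker ((dotF u).prod (dotF v))) = 1 := by
  obtain ⟨hv, huv⟩ := linearIndependent_fin2.mp h
  simp only [Matrix.cons_val_one, Matrix.head_cons, Matrix.cons_val_zero] at hv huv
  set g : ℝ := dot3 u u * dot3 v v - dot3 u v * dot3 u v with hg
  have hvv : dot3 v v ≠ 0 := fun h0 => hv (dot3_self_eq_zero h0)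
  have hgne : g ≠ 0 := by
    intro h0
    set z : Fin 3 → ℝ := dot3 v v • u - dot3 u v • v with hz
    have hzz : dot3 z z = dot3 v v * g := by
      simp only [hz, hg, dot3_sub_left, dot3_sub_right, dot3_smul_left, dot3_smul_right,
        dot3_comm v u]
      ring
    rw [h0, mul_zero] at hzz
    have hz0 : z = 0 := dot3_self_eq_zero hzz
    have : dot3 v v • u = dot3 u v • v := by
      rwa [hz, sub_eq_zero] at hz0
    apply huv (dot3 u v / dot3 v v)
    rw [div_eq_inv_mul, ← smul_smul, ← this, smul_smul, inv_mul_cancel₀ hvv, one_smul]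
  have hsurj : Function.Surjective ((dotF u).prod (dotF v)) := by
    intro p
    refine ⟨((dot3 v v * p.1 - dot3 u v * p.2) / g) • u
      + ((dot3 u u * p.2 - dot3 u v * p.1) / g) • v, ?_⟩
    have : ∀ q : Fin 3 → ℝ,
        dot3 (((dot3 v v * p.1 - dot3 u v * p.2) / g) • u
          + ((dot3 u u * p.2 - dot3 u v * p.1) / g) • v) q
        = (dot3 v v * p.1 - dot3 u v * p.2) / g * dot3 u q
          + (dot3 u u * p.2 - dot3 u v * p.1) / g * dot3 v q := by
      intro q
      rw [dot3_add_left, dot3_smul_left, dot3_smul_left]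
    have e1 := this u
    have e2 := this v
    have := hg
    apply Prod.ext
    · show dot3 _ u = p.1
      rw [e1, dot3_comm v u]
      field_simp
      ring
    · show dot3 _ v = p.2
      rw [e2]
      field_simp
      ring
  have hr := LinearMap.finrank_range_add_finrank_ker ((dotF u).prod (dotF v))
  rw [LinearMap.range_eq_top.mpr hsurj, finrank_top, Module.finrank_prod,
    Module.finrank_self, finrank_fun3] at hr
  omega

lemma nonneg_zero {n : Type*} [Fintype n] (hC : C = {x | ∀ i, 0 ≤ dot3 x (w i)})
    (hint : (interior C).Nonempty)
    (hdim : ∀ i, Module.finrank ℝ (Submodule.span ℝ {x | x ∈ C ∧ dot3 x (w i) = 0}) = 2)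
    {c : n → ℝ} {f : n → Fin 4} (hc : ∀ t, 0 ≤ c t)
    (h : ∑ t, c t • w (f t) = 0) : ∀ t, c t = 0 := by
  intro t
  by_contra hct
  have hct' : 0 < c t := lt_of_le_of_ne (hc t) (Ne.symm hct)
  apply contra_ker hint (wZ hint hdim (f t))
  intro x hx
  have hx' : ∀ i, 0 ≤ dot3 x (w i) := by rw [hC] at hx; exact hx
  have h0 : ∑ s, c s * dot3 x (w (f s)) = 0 := by
    have := congrArg (dot3 x) h
    rw [dot3_sum_right, dot3_zero_right] at this
    simpa [dot3_smul_right] using this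
  have hterm := (Finset.sum_eq_zero_iff_of_nonneg
    (fun s _ => mul_nonneg (hc s) (hx' (f s)))).mp h0 t (Finset.mem_univ t)
  exact (mul_eq_zero.mp hterm).resolve_left hct

lemma quad31 (hC : C = {x | ∀ i, 0 ≤ dot3 x (w i)}) (hint : (interior C).Nonempty)
    (hdim : ∀ i, Module.finrank ℝ (Submodule.span ℝ {x | x ∈ C ∧ dot3 x (w i) = 0}) = 2)
    (hdistinct : ∀ i j, i ≠ j →
      {x | x ∈ C ∧ dot3 x (w i) = 0} ≠ {x | x ∈ C ∧ dot3 x (w j) = 0})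
    {i j l k : Fin 4} (hij : i ≠ j) {a b e d : ℝ}
    (ha : 0 < a) (hb : 0 < b) (he : 0 ≤ e) (hd : 0 < d)
    (h : a • w i + b • w j + e • w l = d • w k) : False := by
  have key : ∀ x, x ∈ C → dot3 x (w k) = 0 → dot3 x (w i) = 0 ∧ dot3 x (w j) = 0 := by
    intro x hx hk
    have hx' : ∀ i, 0 ≤ dot3 x (w i) := by rw [hC] at hx; exact hx
    have := congrArg (dot3 x) h
    rw [dot3_add_right, dot3_add_right, dot3_smul_right, dot3_smul_right, dot3_smul_right,
      dot3_smul_right, hk, mul_zero] at this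
    have h1 := hx' i; have h2 := hx' j; have h3 := hx' l
    constructor <;> nlinarith
  have hle : Submodule.span ℝ {x | x ∈ C ∧ dot3 x (w k) = 0}
      ≤ LinearMap.ker ((dotF (w i)).prod (dotF (w j))) := by
    apply Submodule.span_le.mpr
    intro x hx
    have hk := key x hx.1 hx.2
    simp [SetLike.mem_coe, LinearMap.mem_ker, LinearMap.prod_apply, Pi.prod, dotF_apply,
      hk.1, hk.2, Prod.mk_eq_zero]
  have h1 := Submodule.finrank_mono hle
  rw [ker2_finrank (pair_indep hC hint hdim hdistinct hij), hdim k] at h1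
  omega

lemma tri (hC : C = {x | ∀ i, 0 ≤ dot3 x (w i)}) (hint : (interior C).Nonempty)
    (hdim : ∀ i, Module.finrank ℝ (Submodule.span ℝ {x | x ∈ C ∧ dot3 x (w i) = 0}) = 2)
    (hdistinct : ∀ i j, i ≠ j →
      {x | x ∈ C ∧ dot3 x (w i) = 0} ≠ {x | x ∈ C ∧ dot3 x (w j) = 0})
    {i j k : Fin 4} (hij : i ≠ j) (hik : i ≠ k) (hjk : j ≠ k) {a b d : ℝ}
    (ha : 0 ≤ a) (hb : 0 ≤ b) (hd : 0 ≤ d)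
    (h : a • w i + b • w j = d • w k) : a = 0 ∧ b = 0 ∧ d = 0 := by
  rcases eq_or_lt_of_le hd with hd0 | hd0
  · have h' : ∑ t : Fin 2, (![a, b] t) • w (![i, j] t) = 0 := by
      rw [Fin.sum_univ_two]
      simpa [← hd0] using h
    have hz := nonneg_zero hC hint hdim (c := ![a, b]) (f := ![i, j])
      (by intro t; fin_cases t <;> simpa) h'
    refine ⟨by simpa using hz 0, by simpa using hz 1, hd0.symm⟩
  · exfalso
    rcases eq_or_lt_of_le ha with ha0 | ha0
    · rcases eq_or_lt_of_le hb with hb0 | hb0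
      · apply wZ hint hdim k
        have : d • w k = 0 := by rw [← h, ← ha0, ← hb0]; simp
        rcases smul_eq_zero.mp this with h' | h'
        · exact absurd h' (ne_of_gt hd0)
        · exact h'
      · apply wP hC hint hdim hdistinct hjk (b / d)
        have : d • w k = b • w j := by rw [← h, ← ha0]; simp
        rw [div_eq_inv_mul, ← smul_smul, ← this, smul_smul, inv_mul_cancel₀ (ne_of_gt hd0),
          one_smul]
    · rcases eq_or_lt_of_le hb with hb0 | hb0
      · apply wP hC hint hdim hdistinct hik (a / d)
        have : d • w k = a • w i := by rw [← h, ← hb0]; simp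
        rw [div_eq_inv_mul, ← smul_smul, ← this, smul_smul, inv_mul_cancel₀ (ne_of_gt hd0),
          one_smul]
      · exact quad31 hC hint hdim hdistinct (l := i) hij ha0 hb0 (le_refl (0:ℝ)) hd0
          (by rw [zero_smul, add_zero]; exact h)

lemma rel3 (hC : C = {x | ∀ i, 0 ≤ dot3 x (w i)}) (hint : (interior C).Nonempty)
    (hdim : ∀ i, Module.finrank ℝ (Submodule.span ℝ {x | x ∈ C ∧ dot3 x (w i) = 0}) = 2)
    (hdistinct : ∀ i j, i ≠ j →
      {x | x ∈ C ∧ dot3 x (w i) = 0} ≠ {x | x ∈ C ∧ dot3 x (w j) = 0})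
    {i j k : Fin 4} (hij : i ≠ j) (hik : i ≠ k) (hjk : j ≠ k) {a b c : ℝ}
    (h : a • w i + b • w j + c • w k = 0) : a = 0 ∧ b = 0 ∧ c = 0 := by
  rcases le_or_gt 0 a with ha | ha <;> rcases le_or_gt 0 b with hb | hb <;>
    rcases le_or_gt 0 c with hc | hc
  · have h' : ∑ t : Fin 3, (![a, b, c] t) • w (![i, j, k] t) = 0 := by
      rw [Fin.sum_univ_three]; simpa using h
    have hz := nonneg_zero hC hint hdim (c := ![a, b, c]) (f := ![i, j, k])
      (by intro t; fin_cases t <;> simpa) h'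
    exact ⟨by simpa using hz 0, by simpa using hz 1, by simpa using hz 2⟩
  · have := (tri hC hint hdim hdistinct hij hik hjk ha hb
      (by linarith : (0:ℝ) ≤ -c)
      (by linear_combination (norm := module) h)).2.2
    linarith
  · have := (tri hC hint hdim hdistinct hik hij hjk.symm ha hc
      (by linarith : (0:ℝ) ≤ -b)
      (by linear_combination (norm := module) h)).2.2
    linarith
  · have := (tri hC hint hdim hdistinct hjk hij.symm hik.symm
      (by linarith : (0:ℝ) ≤ -b) (by linarith : (0:ℝ) ≤ -c) ha
      (by linear_combination (norm := module) (-1 : ℝ) • h)).1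
    linarith
  · have := (tri hC hint hdim hdistinct hjk hij.symm hik.symm hb hc
      (by linarith : (0:ℝ) ≤ -a)
      (by linear_combination (norm := module) h)).2.2
    linarith
  · have := (tri hC hint hdim hdistinct hik hij hjk.symm
      (by linarith : (0:ℝ) ≤ -a) (by linarith : (0:ℝ) ≤ -c) hb
      (by linear_combination (norm := module) (-1 : ℝ) • h)).1
    linarith
  · have := (tri hC hint hdim hdistinct hij hik hjk
      (by linarith : (0:ℝ) ≤ -a) (by linarith : (0:ℝ) ≤ -b) hc
      (by linear_combination (norm := module) (-1 : ℝ) • h)).1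
    linarith
  · have h' : ∑ t : Fin 3, (![-a, -b, -c] t) • w (![i, j, k] t) = 0 := by
      rw [Fin.sum_univ_three]
      simp only [Matrix.cons_val_zero, Matrix.cons_val_one, Matrix.head_cons,
        Matrix.cons_val_two, Matrix.tail_cons]
      linear_combination (norm := module) (-1 : ℝ) • h
    have hz := nonneg_zero hC hint hdim (c := ![-a, -b, -c]) (f := ![i, j, k])
      (by intro t; fin_cases t <;> simp <;> linarith) h'
    have := hz 0
    simp at this
    linarith

lemma indep3 (hC : C = {x | ∀ i, 0 ≤ dot3 x (w i)}) (hint : (interior C).Nonempty)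
    (hdim : ∀ i, Module.finrank ℝ (Submodule.span ℝ {x | x ∈ C ∧ dot3 x (w i) = 0}) = 2)
    (hdistinct : ∀ i j, i ≠ j →
      {x | x ∈ C ∧ dot3 x (w i) = 0} ≠ {x | x ∈ C ∧ dot3 x (w j) = 0})
    {i j k : Fin 4} (hij : i ≠ j) (hik : i ≠ k) (hjk : j ≠ k) :
    LinearIndependent ℝ ![w i, w j, w k] := by
  by_contra h
  obtain ⟨g, hg, t, hgt⟩ := Fintype.not_linearIndependent_iff.mp h
  rw [Fin.sum_univ_three] at hg
  simp only [Matrix.cons_val_zero, Matrix.cons_val_one, Matrix.head_cons,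
    Matrix.cons_val_two, Matrix.tail_cons] at hg
  obtain ⟨h0, h1, h2⟩ := rel3 hC hint hdim hdistinct hij hik hjk hg
  fin_cases t <;> simp_all

end Main

/-- The transpose of a linear map with respect to `dot3`. -/
def transLin (T : (Fin 3 → ℝ) →ₗ[ℝ] (Fin 3 → ℝ)) : (Fin 3 → ℝ) →ₗ[ℝ] (Fin 3 → ℝ) where
  toFun x := fun k => dot3 x (T (Pi.single k 1))
  map_add' x y := by funext k; simp [dot3_add_left]
  map_smul' c x := by funext k; simp [dot3_smul_left]

lemma dot3_transLin (T : (Fin 3 → ℝ) →ₗ[ℝ] (Fin 3 → ℝ)) (x y : Fin 3 → ℝ) :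
    dot3 (transLin T x) y = dot3 x (T y) := by
  have hy : y = ∑ k, y k • (Pi.single k 1 : Fin 3 → ℝ) := by
    funext m
    rw [Finset.sum_apply]
    simp [Pi.single_apply]
  calc dot3 (transLin T x) y = ∑ k, dot3 x (T (Pi.single k 1)) * y k := rfl
    _ = ∑ k, dot3 x (T (y k • (Pi.single k 1 : Fin 3 → ℝ))) := by
        apply Finset.sum_congr rfl
        intro k _
        rw [map_smul, dot3_smul_right, mul_comm]
    _ = dot3 x (T (∑ k, y k • (Pi.single k 1 : Fin 3 → ℝ))) := by
        rw [map_sum, dot3_sum_right]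
    _ = dot3 x (T y) := by rw [← hy]

lemma vsum : vCone 0 + vCone 2 = vCone 1 + vCone 3 := by
  funext m
  fin_cases m <;> simp [vCone] <;> norm_num

lemma vIndep {a b c : ℝ} (ha : a ≠ 0) (hb : b ≠ 0) (hc : c ≠ 0) :
    LinearIndependent ℝ ![a • vCone 0, b • vCone 1, c • vCone 2] := by
  rw [Fintype.linearIndependent_iff]
  intro g hg
  rw [Fin.sum_univ_three] at hg
  simp only [Matrix.cons_val_zero, Matrix.cons_val_one, Matrix.head_cons,
    Matrix.cons_val_two, Matrix.tail_cons] at hg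
  have h0 := congrFun hg 0
  have h1 := congrFun hg 1
  have h2 := congrFun hg 2
  simp [vCone] at h0 h1 h2
  have hg1 : g 1 = 0 := h1.resolve_right hb
  rw [hg1, zero_mul] at h2
  have hg0 : g 0 * a = 0 := by linarith
  have hg2 : g 2 * c = 0 := by linarith
  intro t
  fin_cases t
  · exact (mul_eq_zero.mp hg0).resolve_right ha
  · exact hg1
  · exact (mul_eq_zero.mp hg2).resolve_right hc

end St19

namespace St19

lemma pos_factor {s X : ℝ} (hs : 0 < s) (h : 0 ≤ s * X) : 0 ≤ X := by nlinarith

section Key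

variable {w : Fin 4 → Fin 3 → ℝ} {C : Set (Fin 3 → ℝ)}

lemma key (hC : C = {x | ∀ i, 0 ≤ dot3 x (w i)}) {p q r t : Fin 4}
    (hcover : ∀ j : Fin 4, j = p ∨ j = q ∨ j = r ∨ j = t)
    {a b c d : ℝ} (ha : 0 < a) (hb : 0 < b) (hc : 0 < c) (hd : 0 < d)
    (hindep : LinearIndependent ℝ ![w p, w q, w r])
    (hrel : a • w p + c • w r = b • w q + d • w t) :
    ∃ A : (Fin 3 → ℝ) ≃ₗ[ℝ] (Fin 3 → ℝ), ⇑A '' Co = C := by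
  have card3 : Fintype.card (Fin 3) = Module.finrank ℝ (Fin 3 → ℝ) := by
    simp [finrank_fun3]
  set B : Module.Basis (Fin 3) ℝ (Fin 3 → ℝ) := basisOfLinearIndependentOfCardEqFinrank hindep card3
    with hB
  have hmv : LinearIndependent ℝ ![a⁻¹ • vCone 0, b⁻¹ • vCone 1, c⁻¹ • vCone 2] :=
    vIndep (inv_ne_zero ha.ne') (inv_ne_zero hb.ne') (inv_ne_zero hc.ne')
  set B' : Module.Basis (Fin 3) ℝ (Fin 3 → ℝ) := basisOfLinearIndependentOfCardEqFinrank hmv card3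
    with hB'
  set T : (Fin 3 → ℝ) ≃ₗ[ℝ] (Fin 3 → ℝ) := B.equiv B' (Equiv.refl _) with hT
  have hTB : ∀ u : Fin 3, T (![w p, w q, w r] u) = ![a⁻¹ • vCone 0, b⁻¹ • vCone 1,
      c⁻¹ • vCone 2] u := by
    intro u
    have h1 : B u = ![w p, w q, w r] u := by
      rw [hB, coe_basisOfLinearIndependentOfCardEqFinrank]
    have h2 : B' u = ![a⁻¹ • vCone 0, b⁻¹ • vCone 1, c⁻¹ • vCone 2] u := by
      rw [hB', coe_basisOfLinearIndependentOfCardEqFinrank]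
    rw [← h1, ← h2, hT]
    exact B.equiv_apply u B' (Equiv.refl _)
  have hTp : T (w p) = a⁻¹ • vCone 0 := by simpa using hTB 0
  have hTq : T (w q) = b⁻¹ • vCone 1 := by simpa using hTB 1
  have hTr : T (w r) = c⁻¹ • vCone 2 := by simpa using hTB 2
  have hTt : T (w t) = d⁻¹ • vCone 3 := by
    have hw3 : d • w t = a • w p + c • w r - b • w q := by
      linear_combination (norm := module) (-1 : ℝ) • hrel
    have hw3' : w t = d⁻¹ • (a • w p + c • w r - b • w q) := by
      rw [← hw3, smul_smul, inv_mul_cancel₀ hd.ne', one_smul]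
    rw [hw3', map_smul, map_sub, map_add, map_smul, map_smul, map_smul, hTp, hTq, hTr,
      smul_smul, smul_smul, smul_smul, mul_inv_cancel₀ ha.ne', mul_inv_cancel₀ hb.ne',
      mul_inv_cancel₀ hc.ne', one_smul, one_smul, one_smul]
    congr 1
    rw [vsum]
    abel
  set T' : (Fin 3 → ℝ) →ₗ[ℝ] (Fin 3 → ℝ) := transLin T.toLinearMap with hT'
  have hdot : ∀ x y, dot3 (T' x) y = dot3 x (T y) := fun x y => dot3_transLin _ x y
  have hinj : Function.Injective T' := by
    rw [← LinearMap.ker_eq_bot]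
    apply (Submodule.eq_bot_iff _).mpr
    intro x hx
    rw [LinearMap.mem_ker] at hx
    have h1 : dot3 (T' x) (T.symm x) = 0 := by rw [hx]; simp
    rw [hdot, T.apply_symm_apply] at h1
    exact dot3_self_eq_zero h1
  have hsurj : Function.Surjective T' := LinearMap.injective_iff_surjective.mp hinj
  set A : (Fin 3 → ℝ) ≃ₗ[ℝ] (Fin 3 → ℝ) := LinearEquiv.ofBijective T' ⟨hinj, hsurj⟩ with hA
  have hAx : ∀ x, A x = T' x := fun x => rfl
  have hmem : ∀ x, x ∈ Co ↔ T' x ∈ C := by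
    intro x
    rw [hC]
    constructor
    · intro hx j
      rcases hcover j with rfl | rfl | rfl | rfl
      · rw [hdot, hTp, dot3_smul_right]
        exact mul_nonneg (by positivity) (hx 0)
      · rw [hdot, hTq, dot3_smul_right]
        exact mul_nonneg (by positivity) (hx 1)
      · rw [hdot, hTr, dot3_smul_right]
        exact mul_nonneg (by positivity) (hx 2)
      · rw [hdot, hTt, dot3_smul_right]
        exact mul_nonneg (by positivity) (hx 3)
    · intro hx u
      fin_cases u
      · show 0 ≤ dot3 x (vCone 0)
        have := hx p
        rw [hdot, hTp, dot3_smul_right] at this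
        exact pos_factor (inv_pos.mpr ha) this
      · show 0 ≤ dot3 x (vCone 1)
        have := hx q
        rw [hdot, hTq, dot3_smul_right] at this
        exact pos_factor (inv_pos.mpr hb) this
      · show 0 ≤ dot3 x (vCone 2)
        have := hx r
        rw [hdot, hTr, dot3_smul_right] at this
        exact pos_factor (inv_pos.mpr hc) this
      · show 0 ≤ dot3 x (vCone 3)
        have := hx t
        rw [hdot, hTt, dot3_smul_right] at this
        exact pos_factor (inv_pos.mpr hd) this
  refine ⟨A, ?_⟩
  ext y
  constructor
  · rintro ⟨x, hx, rfl⟩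
    rw [hAx]
    exact (hmem x).mp hx
  · intro hy
    refine ⟨A.symm y, ?_, A.apply_symm_apply y⟩
    apply (hmem (A.symm y)).mpr
    have : T' (A.symm y) = y := by rw [← hAx, A.apply_symm_apply]
    rw [this]
    exact hy

end Key
end St19


open St19 in
/-- Every strictly convex polyhedral cone in `ℝ³` with exactly `4` facets
is linearly equivalent to `C_o`: if `C = ∩_{i=1}^4 {x : ⟨x,w_i⟩ ≥ 0}` is a closed convex
cone with nonempty interior satisfying `C ∩ (−C) = {0}`, such that each
`F_i = C ∩ {⟨·,w_i⟩ = 0}` is `2`-dimensional and the four `F_i` are pairwise distinct, then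
there is a linear isomorphism `A` of `ℝ³` with `A(C_o) = C`. -/
theorem stmt19 (w : Fin 4 → Fin 3 → ℝ) (C : Set (Fin 3 → ℝ))
    (hC : C = {x | ∀ i, 0 ≤ dot3 x (w i)})
    (hint : (interior C).Nonempty)
    (hstrict : {x | x ∈ C ∧ -x ∈ C} = {(0 : Fin 3 → ℝ)})
    (hdim : ∀ i,
      Module.finrank ℝ (Submodule.span ℝ {x | x ∈ C ∧ dot3 x (w i) = 0}) = 2)
    (hdistinct : ∀ i j, i ≠ j →
      {x | x ∈ C ∧ dot3 x (w i) = 0} ≠ {x | x ∈ C ∧ dot3 x (w j) = 0}) :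
    ∃ A : (Fin 3 → ℝ) ≃ₗ[ℝ] (Fin 3 → ℝ), ⇑A '' Co = C := by
  classical
  have hnli : ¬ LinearIndependent ℝ w := by
    intro h
    have := h.fintype_card_le_finrank
    rw [finrank_fun3] at this
    simp at this
  obtain ⟨g, hg4, t0, hgt0⟩ := Fintype.not_linearIndependent_iff.mp hnli
  have hg : g 0 • w 0 + g 1 • w 1 + g 2 • w 2 + g 3 • w 3 = 0 := by
    rw [← hg4, Fin.sum_univ_four]
  have hgn0 : g 0 ≠ 0 := by
    intro h0
    have h' : g 1 • w 1 + g 2 • w 2 + g 3 • w 3 = 0 := by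
      rw [h0, zero_smul, zero_add] at hg; exact hg
    obtain ⟨e1, e2, e3⟩ := rel3 hC hint hdim hdistinct
      (by decide) (by decide) (by decide) h'
    fin_cases t0 <;> simp_all
  have hgn1 : g 1 ≠ 0 := by
    intro h1
    have h' : g 0 • w 0 + g 2 • w 2 + g 3 • w 3 = 0 := by
      rw [h1, zero_smul, add_zero] at hg; exact hg
    obtain ⟨e1, e2, e3⟩ := rel3 hC hint hdim hdistinct
      (by decide) (by decide) (by decide) h'
    fin_cases t0 <;> simp_all
  have hgn2 : g 2 ≠ 0 := by
    intro h2
    have h' : g 0 • w 0 + g 1 • w 1 + g 3 • w 3 = 0 := by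
      rw [h2, zero_smul, add_zero] at hg; exact hg
    obtain ⟨e1, e2, e3⟩ := rel3 hC hint hdim hdistinct
      (by decide) (by decide) (by decide) h'
    fin_cases t0 <;> simp_all
  have hgn3 : g 3 ≠ 0 := by
    intro h3
    have h' : g 0 • w 0 + g 1 • w 1 + g 2 • w 2 = 0 := by
      rw [h3, zero_smul, add_zero] at hg; exact hg
    obtain ⟨e1, e2, e3⟩ := rel3 hC hint hdim hdistinct
      (by decide) (by decide) (by decide) h'
    fin_cases t0 <;> simp_all
  rcases hgn0.lt_or_gt with h0 | h0 <;> rcases hgn1.lt_or_gt with h1 | h1 <;>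
    rcases hgn2.lt_or_gt with h2 | h2 <;> rcases hgn3.lt_or_gt with h3 | h3
  · -- (−,−,−,−)
    exfalso
    have h' : ∑ u : Fin 4, (fun u => -g u) u • w ((fun u => u) u) = 0 := by
      rw [Fin.sum_univ_four]
      linear_combination (norm := module) (-1 : ℝ) • hg
    have := nonneg_zero hC hint hdim
      (fun u => by fin_cases u <;> simp <;> linarith) h' 0
    simp at this; linarith
  · -- (−,−,−,+)
    exfalso
    exact quad31 hC hint hdim hdistinct (i := 0) (j := 1) (l := 2) (k := 3)
      (a := -g 0) (b := -g 1) (e := -g 2) (d := g 3) (by decide)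
      (by linarith) (by linarith) (by linarith) h3
      (by linear_combination (norm := module) (-1 : ℝ) • hg)
  · -- (−,−,+,−)
    exfalso
    exact quad31 hC hint hdim hdistinct (i := 0) (j := 1) (l := 3) (k := 2)
      (a := -g 0) (b := -g 1) (e := -g 3) (d := g 2) (by decide)
      (by linarith) (by linarith) (by linarith) h2
      (by linear_combination (norm := module) (-1 : ℝ) • hg)
  · -- (−,−,+,+)
    exact key hC (p := 2) (q := 0) (r := 3) (t := 1)
      (a := g 2) (b := -g 0) (c := g 3) (d := -g 1) (by decide)
      h2 (by linarith) h3 (by linarith)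
      (indep3 hC hint hdim hdistinct (by decide) (by decide) (by decide))
      (by linear_combination (norm := module) hg)
  · -- (−,+,−,−)
    exfalso
    exact quad31 hC hint hdim hdistinct (i := 0) (j := 2) (l := 3) (k := 1)
      (a := -g 0) (b := -g 2) (e := -g 3) (d := g 1) (by decide)
      (by linarith) (by linarith) (by linarith) h1
      (by linear_combination (norm := module) (-1 : ℝ) • hg)
  · -- (−,+,−,+)
    exact key hC (p := 1) (q := 0) (r := 3) (t := 2)
      (a := g 1) (b := -g 0) (c := g 3) (d := -g 2) (by decide)
      h1 (by linarith) h3 (by linarith)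
      (indep3 hC hint hdim hdistinct (by decide) (by decide) (by decide))
      (by linear_combination (norm := module) hg)
  · -- (−,+,+,−)
    exact key hC (p := 1) (q := 0) (r := 2) (t := 3)
      (a := g 1) (b := -g 0) (c := g 2) (d := -g 3) (by decide)
      h1 (by linarith) h2 (by linarith)
      (indep3 hC hint hdim hdistinct (by decide) (by decide) (by decide))
      (by linear_combination (norm := module) hg)
  · -- (−,+,+,+)
    exfalso
    exact quad31 hC hint hdim hdistinct (i := 1) (j := 2) (l := 3) (k := 0)
      (a := g 1) (b := g 2) (e := g 3) (d := -g 0) (by decide)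
      h1 h2 (by linarith) (by linarith)
      (by linear_combination (norm := module) hg)
  · -- (+,−,−,−)
    exfalso
    exact quad31 hC hint hdim hdistinct (i := 1) (j := 2) (l := 3) (k := 0)
      (a := -g 1) (b := -g 2) (e := -g 3) (d := g 0) (by decide)
      (by linarith) (by linarith) (by linarith) h0
      (by linear_combination (norm := module) (-1 : ℝ) • hg)
  · -- (+,−,−,+)
    exact key hC (p := 0) (q := 1) (r := 3) (t := 2)
      (a := g 0) (b := -g 1) (c := g 3) (d := -g 2) (by decide)
      h0 (by linarith) h3 (by linarith)
      (indep3 hC hint hdim hdistinct (by decide) (by decide) (by decide))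
      (by linear_combination (norm := module) hg)
  · -- (+,−,+,−)
    exact key hC (p := 0) (q := 1) (r := 2) (t := 3)
      (a := g 0) (b := -g 1) (c := g 2) (d := -g 3) (by decide)
      h0 (by linarith) h2 (by linarith)
      (indep3 hC hint hdim hdistinct (by decide) (by decide) (by decide))
      (by linear_combination (norm := module) hg)
  · -- (+,−,+,+)
    exfalso
    exact quad31 hC hint hdim hdistinct (i := 0) (j := 2) (l := 3) (k := 1)
      (a := g 0) (b := g 2) (e := g 3) (d := -g 1) (by decide)
      h0 h2 (by linarith) (by linarith)
      (by linear_combination (norm := module) hg)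
  · -- (+,+,−,−)
    exact key hC (p := 0) (q := 2) (r := 1) (t := 3)
      (a := g 0) (b := -g 2) (c := g 1) (d := -g 3) (by decide)
      h0 (by linarith) h1 (by linarith)
      (indep3 hC hint hdim hdistinct (by decide) (by decide) (by decide))
      (by linear_combination (norm := module) hg)
  · -- (+,+,−,+)
    exfalso
    exact quad31 hC hint hdim hdistinct (i := 0) (j := 1) (l := 3) (k := 2)
      (a := g 0) (b := g 1) (e := g 3) (d := -g 2) (by decide)
      h0 h1 (by linarith) (by linarith)
      (by linear_combination (norm := module) hg)
  · -- (+,+,+,−)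
    exfalso
    exact quad31 hC hint hdim hdistinct (i := 0) (j := 1) (l := 2) (k := 3)
      (a := g 0) (b := g 1) (e := g 2) (d := -g 3) (by decide)
      h0 h1 (by linarith) (by linarith)
      (by linear_combination (norm := module) hg)
  · -- (+,+,+,+)
    exfalso
    have h' : ∑ u : Fin 4, g u • w ((fun u => u) u) = 0 := by
      rw [Fin.sum_univ_four]; exact hg
    have := nonneg_zero hC hint hdim
      (fun u => by fin_cases u <;> simp <;> linarith) h' 0
    exact hgn0 this
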